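/- Let L be a finite join-semidistributive lattice and let j be a join-irreducible element of L such that K(j) has no greatest element. Let X denote the set of join-irreducible elements j' ≠ j such that {j, j'} is a face of the canonical join complex. Then: (1) ⋁X ∨ j = ⋁X ∨ j_*; and (2) there exists a nonempty antichain Y ∈ 𝒜_j such that ⋁Y ∨ j = ⋁Y ∨ j_*. -/

import Mathlib

universe u v

def JoinSemidistrib (α : Type*) [Lattice α] : Prop :=
  ∀ x y z : α, x ⊔ y = x ⊔ z → x ⊔ (y ⊓ z) = x ⊔ y

def MeetSemidistrib (α : Type*) [Lattice α] : Prop :=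
  ∀ x y z : α, x ⊓ y = x ⊓ z → x ⊓ (y ⊔ z) = x ⊓ y

section JoinDefs

variable {α : Type*} [Lattice α] [OrderBot α]

/-- `j` is join-irreducible: not the bottom element, and `j = a ⊔ b` implies `j = a` or `j = b`. -/
def JoinIrred (j : α) : Prop :=
  j ≠ ⊥ ∧ ∀ a b : α, j = a ⊔ b → j = a ∨ j = b

/-- `A` join-refines `B`: every element of `A` is below some element of `B`. -/
def JoinRefines (A B : Finset α) : Prop :=
  ∀ a ∈ A, ∃ b ∈ B, a ≤ b

/-- `A` is an irredundant join representation of `w`. -/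
def IrredJoinRep (A : Finset α) (w : α) : Prop :=
  A.sup id = w ∧ ∀ A' ⊂ A, A'.sup id < w

/-- `A` is the canonical join representation of `w`: the irredundant join representation
of `w` that join-refines every irredundant join representation of `w`. -/
def CanonicalJoinRep (A : Finset α) (w : α) : Prop :=
  IrredJoinRep A w ∧ ∀ B : Finset α, IrredJoinRep B w → JoinRefines A B

/-- `A` joins canonically, i.e. `A` is a face of the canonical join complex. -/
def JoinsCanonically (A : Finset α) : Prop :=
  CanonicalJoinRep A (A.sup id)

/-- `j` is a canonical joinand of `w`. -/
def CanonicalJoinand (j w : α) : Prop :=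
  ∃ A : Finset α, CanonicalJoinRep A w ∧ j ∈ A

end JoinDefs

/-- The canonical join complex is flag: any finite set of join-irreducible elements all of
whose two-element subsets are faces is itself a face. -/
def FlagCanonicalJoinComplex (α : Type*) [Lattice α] [OrderBot α] [DecidableEq α] : Prop :=
  ∀ F : Finset α, (∀ j ∈ F, JoinIrred j) →
    (∀ j ∈ F, ∀ j' ∈ F, j ≠ j' → JoinsCanonically ({j, j'} : Finset α)) →
    JoinsCanonically F

/-- A lattice is crosscut-simplicial if for every `x ≤ y` and every proper subset `S` of the
set of atoms of the interval `[x, y]` (elements `a` with `x ⋖ a` and `a ≤ y`), the join of `x`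
with all elements of `S` is strictly less than `y`. -/
def CrosscutSimplicial (β : Type*) [Lattice β] : Prop :=
  ∀ x y : β, x ≤ y → ∀ S : Finset β,
    (∀ a ∈ S, x ⋖ a ∧ a ≤ y) →
    (∃ a : β, (x ⋖ a ∧ a ≤ y) ∧ a ∉ S) →
    S.fold (· ⊔ · : β → β → β) x id < y

section MeetDefs

variable {α : Type*} [Lattice α] [OrderTop α]

/-- `m` is meet-irreducible: not the top element, and `m = a ⊓ b` implies `m = a` or `m = b`. -/
def MeetIrred (m : α) : Prop :=
  m ≠ ⊤ ∧ ∀ a b : α, m = a ⊓ b → m = a ∨ m = b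

/-- `A` meet-refines `B`: every element of `A` is above some element of `B`. -/
def MeetRefines (A B : Finset α) : Prop :=
  ∀ a ∈ A, ∃ b ∈ B, b ≤ a

/-- `A` is an irredundant meet representation of `w`. -/
def IrredMeetRep (A : Finset α) (w : α) : Prop :=
  A.inf id = w ∧ ∀ A' ⊂ A, w < A'.inf id

/-- `A` is the canonical meet representation of `w`. -/
def CanonicalMeetRep (A : Finset α) (w : α) : Prop :=
  IrredMeetRep A w ∧ ∀ B : Finset α, IrredMeetRep B w → MeetRefines A B

/-- `A` meets canonically, i.e. `A` is a face of the canonical meet complex. -/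
def MeetsCanonically (A : Finset α) : Prop :=
  CanonicalMeetRep A (A.inf id)

end MeetDefs

/-- The canonical meet complex is flag. -/
def FlagCanonicalMeetComplex (α : Type*) [Lattice α] [OrderTop α] [DecidableEq α] : Prop :=
  ∀ F : Finset α, (∀ m ∈ F, MeetIrred m) →
    (∀ m ∈ F, ∀ m' ∈ F, m ≠ m' → MeetsCanonically ({m, m'} : Finset α)) →
    MeetsCanonically F


section Aux

variable {α : Type*} [Lattice α] [OrderBot α]

/-- Iterated join-semidistributivity over a finite set. -/
lemma jsd_step (h : JoinSemidistrib α) (u : α) (V : Finset α) :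
    ∀ x : α, x ⊔ u = x ⊔ V.sup id → x ⊔ V.sup (fun v => u ⊓ v) = x ⊔ u := by
  classical
  induction V using Finset.induction with
  | empty => intro x hx; simpa using hx.symm
  | @insert v V' hv ih =>
    intro x hx
    rw [Finset.sup_insert, id] at hx
    have hsle : V'.sup id ≤ x ⊔ u := by
      rw [hx]; exact le_sup_of_le_right le_sup_right
    have h1 : (x ⊔ V'.sup id) ⊔ u = (x ⊔ V'.sup id) ⊔ v := by
      have e1 : (x ⊔ V'.sup id) ⊔ u = (x ⊔ u) ⊔ V'.sup id := by
        simp [sup_assoc, sup_comm, sup_left_comm]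
      have e2 : (x ⊔ V'.sup id) ⊔ v = (x ⊔ (v ⊔ V'.sup id)) ⊔ V'.sup id := by
        simp [sup_assoc, sup_comm, sup_left_comm]
      rw [e1, e2, hx]
    have h2 : (x ⊔ V'.sup id) ⊔ (u ⊓ v) = (x ⊔ V'.sup id) ⊔ u := h _ _ _ h1
    have h3 : (x ⊔ (u ⊓ v)) ⊔ u = x ⊔ u := by
      rw [sup_assoc, sup_comm (u ⊓ v) u, sup_inf_self]
    have h4 : (x ⊔ (u ⊓ v)) ⊔ V'.sup id = (x ⊔ (u ⊓ v)) ⊔ u := by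
      have e3 : (x ⊔ (u ⊓ v)) ⊔ V'.sup id = (x ⊔ V'.sup id) ⊔ (u ⊓ v) := by
        simp [sup_assoc, sup_comm, sup_left_comm]
      rw [e3, h2]
      calc (x ⊔ V'.sup id) ⊔ u = (x ⊔ u) ⊔ V'.sup id := by
            simp [sup_assoc, sup_comm, sup_left_comm]
        _ = x ⊔ u := sup_eq_left.mpr hsle
        _ = (x ⊔ (u ⊓ v)) ⊔ u := h3.symm
    have h5 := ih (x ⊔ (u ⊓ v)) h4.symm
    rw [h3] at h5
    rw [Finset.sup_insert, ← sup_assoc]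
    exact h5

lemma jsd_double (h : JoinSemidistrib α) (w : α) (V : Finset α) (hV : V.sup id = w)
    (U : Finset α) : ∀ c : α, c ⊔ U.sup id = w →
    c ⊔ U.sup (fun u => V.sup (fun v => u ⊓ v)) = w := by
  classical
  induction U using Finset.induction with
  | empty => intro c hc; simpa using hc
  | @insert u U' hu ih =>
    intro c hc
    rw [Finset.sup_insert, id] at hc
    set x := c ⊔ U'.sup id with hxdef
    have hxw : x ⊔ u = w := by
      rw [hxdef]; rw [← hc]; simp [sup_assoc, sup_comm, sup_left_comm]
    have hxle : x ≤ w := le_of_le_of_eq le_sup_left hxw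
    have hx2 : x ⊔ u = x ⊔ V.sup id := by
      rw [hxw, hV, sup_eq_right.mpr hxle]
    have h1 := jsd_step h u V x hx2
    rw [hxw] at h1
    -- h1 : x ⊔ V.sup (fun v => u ⊓ v) = w
    have h2 : (c ⊔ V.sup (fun v => u ⊓ v)) ⊔ U'.sup id = w := by
      rw [← h1, hxdef]; simp [sup_assoc, sup_comm, sup_left_comm]
    have h3 := ih (c ⊔ V.sup (fun v => u ⊓ v)) h2
    rw [Finset.sup_insert]
    rw [← h3]; simp [sup_assoc, sup_comm, sup_left_comm]

lemma sup_image₂ [DecidableEq α] (U V : Finset α) :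
    (Finset.image₂ (· ⊓ ·) U V).sup id = U.sup (fun u => V.sup (fun v => u ⊓ v)) := by
  apply le_antisymm
  · apply Finset.sup_le
    intro x hx
    rcases Finset.mem_image₂.mp hx with ⟨u, hu, v, hv, rfl⟩
    exact le_trans (Finset.le_sup (f := fun v => u ⊓ v) hv) (Finset.le_sup (f := fun u => V.sup (fun v => u ⊓ v)) hu)
  · apply Finset.sup_le
    intro u hu
    apply Finset.sup_le
    intro v hv
    exact Finset.le_sup (f := id) (Finset.mem_image₂_of_mem hu hv)

/-- There is a join representation refining every member of a family of join reps. -/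
lemma exists_refining [DecidableEq α] (h : JoinSemidistrib α) (w : α)
    (S : Finset (Finset α)) (hS : ∀ V ∈ S, V.sup id = w) :
    ∃ M : Finset α, M.sup id = w ∧ ∀ V ∈ S, JoinRefines M V := by
  classical
  induction S using Finset.induction with
  | empty => exact ⟨{w}, by simp, by simp⟩
  | @insert V S' hV ih =>
    obtain ⟨M', hM'w, hM'ref⟩ := ih (fun V hv => hS V (Finset.mem_insert_of_mem hv))
    have hVw : V.sup id = w := hS V (Finset.mem_insert_self _ _)
    refine ⟨Finset.image₂ (· ⊓ ·) M' V, ?_, ?_⟩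
    · rw [sup_image₂]
      have := jsd_double h w V hVw M' ⊥ (by simpa using hM'w)
      simpa using this
    · intro W hW a ha
      rcases Finset.mem_image₂.mp ha with ⟨m, hm, v, hv, rfl⟩
      rcases Finset.mem_insert.mp hW with rfl | hW'
      · exact ⟨v, hv, inf_le_right⟩
      · obtain ⟨b, hb, hmb⟩ := hM'ref W hW' m hm
        exact ⟨b, hb, le_trans inf_le_left hmb⟩

/-- Every join representation contains an irredundant one. -/
lemma exists_irred_subset [DecidableEq α] (D : Finset α) (w : α) (hD : D.sup id = w) :
    ∃ E ⊆ D, IrredJoinRep E w := by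
  classical
  have hne : (D.powerset.filter (fun A => A.sup id = w)).Nonempty :=
    ⟨D, Finset.mem_filter.mpr ⟨Finset.mem_powerset_self D, hD⟩⟩
  obtain ⟨E, hE, hmin⟩ := Finset.exists_minimal hne
  rw [Finset.mem_filter, Finset.mem_powerset] at hE
  refine ⟨E, hE.1, hE.2, fun A' hA' => ?_⟩
  have hle : A'.sup id ≤ w := hE.2 ▸ Finset.sup_mono hA'.subset
  rcases lt_or_eq_of_le hle with hlt | heq
  · exact hlt
  · exact absurd hA' (by
      intro hss
      exact hss.ne (Finset.Subset.antisymm hss.subset (hmin (Finset.mem_filter.mpr ⟨Finset.mem_powerset.mpr (hss.subset.trans hE.1), heq⟩) hss.subset)))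

/-- Every element of a finite join-semidistributive lattice has a canonical join rep. -/
lemma exists_cjr [Fintype α] [DecidableEq α] (h : JoinSemidistrib α) (w : α) :
    ∃ A : Finset α, CanonicalJoinRep A w := by
  classical
  set S : Finset (Finset α) := Finset.univ.filter (fun V => V.sup id = w) with hSdef
  obtain ⟨M, hMw, hMref⟩ := exists_refining h w S (fun V hV => (Finset.mem_filter.mp hV).2)
  obtain ⟨A, hAM, hAirr⟩ := exists_irred_subset M w hMw
  refine ⟨A, hAirr, fun B hB => ?_⟩
  have hBS : B ∈ S := Finset.mem_filter.mpr ⟨Finset.mem_univ _, hB.1⟩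
  intro a ha
  exact hMref B hBS a (hAM ha)

/-- Irredundant join representations are antichains. -/
lemma irred_antichain {A : Finset α} {w : α} (hA : IrredJoinRep A w)
    {a b : α} (ha : a ∈ A) (hb : b ∈ A) (hab : a ≠ b) (hle : a ≤ b) : False := by
  classical
  have hss : A.erase a ⊂ A := Finset.erase_ssubset ha
  have hsup : (A.erase a).sup id = w := by
    apply le_antisymm
    · rw [← hA.1]; exact Finset.sup_mono (Finset.erase_subset _ _)
    · rw [← hA.1]
      apply Finset.sup_le
      intro x hx
      by_cases hxa : x = a
      · subst hxa
        exact le_trans hle (Finset.le_sup (f := id) (Finset.mem_erase.mpr ⟨hab.symm ∘ Eq.symm ∘ Eq.symm, hb⟩))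
      · exact Finset.le_sup (f := id) (Finset.mem_erase.mpr ⟨hxa, hx⟩)
  exact absurd hsup (ne_of_lt (hA.2 _ hss))

/-- Helper: if `A` is the canonical join rep of `w` and `A' ⊆ A`, then every join
representation of `A'.sup id` is join-refined by `A'`. -/
lemma cjr_subset_refines [DecidableEq α] {A : Finset α} {w : α}
    (hA : CanonicalJoinRep A w) {A' : Finset α} (hsub : A' ⊆ A)
    {B : Finset α} (hB : B.sup id = A'.sup id) :
    ∀ a ∈ A', ∃ b ∈ B, a ≤ b := by
  classical
  intro a ha
  set D : Finset α := (A \ A') ∪ B with hDdef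
  have hDsup : D.sup id = w := by
    rw [hDdef, Finset.sup_union, hB, ← Finset.sup_union, Finset.sdiff_union_of_subset hsub, hA.1.1]
  obtain ⟨E, hED, hEirr⟩ := exists_irred_subset D w hDsup
  obtain ⟨e, he, hae⟩ := hA.2 E hEirr a (hsub ha)
  rcases Finset.mem_union.mp (hED he) with hel | her
  · rw [Finset.mem_sdiff] at hel
    exact absurd hae (by
      intro h'
      exact irred_antichain hA.1 (hsub ha) hel.1 (fun hq => hel.2 (hq ▸ ha)) h')
  · exact ⟨e, her, hae⟩

/-- Subsets of canonical join representations join canonically. -/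
lemma cjr_subset [DecidableEq α] {A : Finset α} {w : α}
    (hA : CanonicalJoinRep A w) {A' : Finset α} (hsub : A' ⊆ A) :
    JoinsCanonically A' := by
  classical
  constructor
  · refine ⟨rfl, fun A'' hA'' => ?_⟩
    have hle : A''.sup id ≤ A'.sup id := Finset.sup_mono hA''.subset
    rcases lt_or_eq_of_le hle with hlt | heq
    · exact hlt
    · exfalso
      obtain ⟨a, ha', ha''⟩ := Finset.exists_of_ssubset hA''
      obtain ⟨b, hb, hab⟩ := cjr_subset_refines hA hsub heq a ha'
      exact irred_antichain hA.1 (hsub ha') (hsub (hA''.subset hb))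
        (fun hq => ha'' (hq ▸ hb)) hab
  · intro B hB a ha
    exact cjr_subset_refines hA hsub hB.1 a ha

/-- Canonical joinands are join-irreducible. -/
lemma cjr_joinIrred [DecidableEq α] {A : Finset α} {w : α}
    (hA : CanonicalJoinRep A w) {a : α} (ha : a ∈ A) : JoinIrred a := by
  classical
  have hsupA : a ⊔ (A.erase a).sup id = w := by
    rw [← hA.1.1]
    conv_rhs => rw [← Finset.insert_erase ha]
    simp [Finset.sup_insert]
  constructor
  · intro hbot
    subst hbot
    have : (A.erase ⊥).sup id = w := by rw [← hsupA]; simp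
    exact absurd this (ne_of_lt (hA.1.2 _ (Finset.erase_ssubset ha)))
  · intro x y hxy
    by_contra hcon
    push_neg at hcon
    have hx : x < a := lt_of_le_of_ne (hxy ▸ le_sup_left) (fun hq => hcon.1 hq.symm)
    have hy : y < a := lt_of_le_of_ne (hxy ▸ le_sup_right) (fun hq => hcon.2 hq.symm)
    set D : Finset α := insert x (insert y (A.erase a)) with hDdef
    have hDsup : D.sup id = w := by
      rw [hDdef, Finset.sup_insert, Finset.sup_insert, id, id, ← sup_assoc, ← hxy, hsupA]
    obtain ⟨E, hED, hEirr⟩ := exists_irred_subset D w hDsup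
    obtain ⟨e, he, hae⟩ := hA.2 E hEirr a ha
    rcases Finset.mem_insert.mp (hED he) with rfl | h2
    · exact absurd hae (not_le_of_gt hx)
    rcases Finset.mem_insert.mp h2 with rfl | h3
    · exact absurd hae (not_le_of_gt hy)
    · rw [Finset.mem_erase] at h3
      exact irred_antichain hA.1 ha h3.2 (Ne.symm h3.1) hae

lemma below_joinIrred {j jstar x : α} (hj : JoinIrred j) (hstar : jstar ⋖ j)
    (hx : x < j) : x ≤ jstar := by
  rcases hstar.eq_or_eq (le_sup_left : jstar ≤ jstar ⊔ x) (sup_le hstar.le hx.le) with h | h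
  · exact le_trans le_sup_right h.le
  · rcases hj.2 jstar x h.symm with h1 | h1
    · exact absurd h1 (ne_of_gt hstar.lt)
    · exact absurd h1 (ne_of_gt hx)

end Aux

/-- Lemma (kappa): if `κ(j)` does not exist and `X` is the set of join-irreducibles `j' ≠ j`
with `{j, j'}` a face, then `⋁X ⊔ j = ⋁X ⊔ j_*`, and there is a nonempty antichain `Y ∈ 𝒜_j`
with `⋁Y ⊔ j = ⋁Y ⊔ j_*`. -/
theorem stmt_11 {α : Type*} [Lattice α] [OrderBot α] [Fintype α] [DecidableEq α]
    (hjsd : JoinSemidistrib α) (j jstar : α) (hj : JoinIrred j) (hstar : jstar ⋖ j)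
    (hk : ¬ ∃ m : α, IsGreatest {a : α | jstar ≤ a ∧ ¬ j ≤ a} m)
    (X : Finset α)
    (hX : ∀ j' : α, j' ∈ X ↔
      JoinIrred j' ∧ j' ≠ j ∧ JoinsCanonically ({j, j'} : Finset α)) :
    (X.sup id ⊔ j = X.sup id ⊔ jstar) ∧
    ∃ Y : Finset α, Y.Nonempty ∧ j ∉ Y ∧
      IsAntichain (· ≤ ·) (↑Y : Set α) ∧
      IsAntichain (· ≤ ·) (insert j (↑Y : Set α)) ∧
      Y.sup id ⊔ j = Y.sup id ⊔ jstar := by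
  classical
  have hjsj : jstar < j := hstar.lt
  have hnjjs : ¬ j ≤ jstar := not_le_of_gt hjsj
  -- Part 1
  have part1 : X.sup id ⊔ j = X.sup id ⊔ jstar := by
    set s : α := X.sup id with hs
    have hj_le : j ≤ s ⊔ jstar := by
      by_contra hjle
      set c : α := s ⊔ jstar with hc
      -- a maximal element of K(j) above c
      set Kc : Finset α := Finset.univ.filter (fun x => (jstar ≤ x ∧ ¬ j ≤ x) ∧ c ≤ x)
        with hKc
      have hcK : c ∈ Kc := by
        rw [hKc, Finset.mem_filter]
        exact ⟨Finset.mem_univ _, ⟨le_sup_right, hjle⟩, le_rfl⟩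
      obtain ⟨a, haK, hamax⟩ := Finset.exists_maximal ⟨c, hcK⟩
      rw [hKc, Finset.mem_filter] at haK
      obtain ⟨-, ⟨hjsa, hja⟩, hca⟩ := haK
      have hmax : ∀ x : α, a < x → j ≤ x := by
        intro x hax
        by_contra hjx
        refine not_le_of_gt hax (hamax (?_ : x ∈ Kc) hax.le)
        rw [hKc, Finset.mem_filter]
        exact ⟨Finset.mem_univ _, ⟨hjsa.trans hax.le, hjx⟩, hca.trans hax.le⟩
      -- an element of K(j) not below a
      have hex : ∃ a' : α, (jstar ≤ a' ∧ ¬ j ≤ a') ∧ ¬ a' ≤ a := by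
        by_contra hcon
        push_neg at hcon
        exact hk ⟨a, ⟨hjsa, hja⟩, fun b hb => hcon b hb⟩
      obtain ⟨a', ⟨hjsa', hja'⟩, ha'a⟩ := hex
      have ha'ne : a' ≠ jstar := by
        intro h
        exact ha'a (h ▸ (le_sup_right.trans hca : jstar ≤ a))
      have hna'j : ¬ a' ≤ j := by
        intro h
        have h1 : a' < j := lt_of_le_of_ne h (fun hq => hja' (hq ▸ le_rfl))
        exact ha'ne (le_antisymm (below_joinIrred hj hstar h1) hjsa')
      set w' : α := j ⊔ a' with hw'
      have hjw' : j < w' := lt_of_le_of_ne le_sup_left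
        (fun h => hna'j (h ▸ le_sup_right : a' ≤ j))
      have ha'w' : a' < w' := lt_of_le_of_ne le_sup_right
        (fun h => hja' (h ▸ le_sup_left : j ≤ a'))
      have hirr : IrredJoinRep ({j, a'} : Finset α) w' := by
        constructor
        · simp [hw']
        · intro A'' hss
          by_cases hjA : j ∈ A''
          · have ha'A : a' ∉ A'' := by
              intro ha'A
              exact hss.ne (Finset.Subset.antisymm hss.subset
                (Finset.insert_subset hjA (Finset.singleton_subset_iff.mpr ha'A)))
            have : A''.sup id ≤ j := by
              apply Finset.sup_le
              intro x hx
              rcases Finset.mem_insert.mp (hss.subset hx) with rfl | hx'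
              · exact le_rfl
              · exact absurd (Finset.mem_singleton.mp hx') (fun hq => ha'A (hq ▸ hx))
            exact lt_of_le_of_lt this hjw'
          · have : A''.sup id ≤ a' := by
              apply Finset.sup_le
              intro x hx
              rcases Finset.mem_insert.mp (hss.subset hx) with rfl | hx'
              · exact absurd hx hjA
              · exact (Finset.mem_singleton.mp hx') ▸ le_rfl
            exact lt_of_le_of_lt this ha'w'
      obtain ⟨A, hA⟩ := exists_cjr hjsd w'
      have href : ∀ e ∈ A, e ≤ j ∨ e ≤ a' := by
        intro e he
        obtain ⟨b, hb, heb⟩ := hA.2 _ hirr e he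
        rcases Finset.mem_insert.mp hb with rfl | hb'
        · exact Or.inl heb
        · exact Or.inr ((Finset.mem_singleton.mp hb') ▸ heb)
      have hjA : j ∈ A := by
        have hexe : ∃ e ∈ A, ¬ e ≤ a' := by
          by_contra hcon
          push_neg at hcon
          have : w' ≤ a' := hA.1.1 ▸ Finset.sup_le (fun e he => hcon e he)
          exact hja' (le_sup_left.trans this)
        obtain ⟨e, heA, hea'⟩ := hexe
        have hej : e ≤ j := (href e heA).resolve_right hea'
        have : e = j := by
          by_contra hne
          exact hea' ((below_joinIrred hj hstar (lt_of_le_of_ne hej hne)).trans hjsa')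
        exact this ▸ heA
      have hbX : ∀ b ∈ A.erase j, b ≤ a' ∧ b ∈ X := by
        intro b hb
        rw [Finset.mem_erase] at hb
        have hba' : b ≤ a' := by
          rcases href b hb.2 with hbj | hba'
          · exact absurd hbj (fun hq =>
              irred_antichain hA.1 hb.2 hjA hb.1 hq)
          · exact hba'
        refine ⟨hba', (hX b).mpr ⟨cjr_joinIrred hA hb.2, hb.1, ?_⟩⟩
        exact cjr_subset hA (Finset.insert_subset hjA
          (Finset.singleton_subset_iff.mpr hb.2))
      set t : α := (A.erase j).sup id with ht
      have hta : t ≤ a := by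
        have hts : t ≤ s := by
          rw [ht, hs]
          exact Finset.sup_le (fun b hb => Finset.le_sup (f := id) (hbX b hb).2)
        exact hts.trans ((le_sup_left : s ≤ c).trans hca)
      have hw't : w' = j ⊔ t := by
        rw [← hA.1.1]
        conv_lhs => rw [← Finset.insert_erase hjA]
        simp [Finset.sup_insert, ht]
      have haa' : a ⊔ a' = a ⊔ j := by
        apply le_antisymm
        · have : a' ≤ j ⊔ a := (ha'w'.le.trans (le_of_eq hw't)).trans
            (sup_le_sup_left hta j)
          exact sup_le le_sup_left (this.trans (sup_le le_sup_right le_sup_left))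
        · have haa : a < a ⊔ a' := lt_of_le_of_ne le_sup_left
            (fun h => ha'a (h ▸ le_sup_right : a' ≤ a))
          exact sup_le le_sup_left (hmax _ haa)
      have hjsd' := hjsd a j a' haa'.symm
      have hinf : j ⊓ a' = jstar := by
        apply le_antisymm
        · apply below_joinIrred hj hstar
          exact lt_of_le_of_ne inf_le_left (fun h => hja' (h ▸ inf_le_right))
        · exact le_inf hjsj.le hjsa'
      rw [hinf] at hjsd'
      rw [sup_eq_left.mpr hjsa] at hjsd'
      exact hja (hjsd' ▸ le_sup_right)
    apply le_antisymm
    · exact sup_le le_sup_left hj_le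
    · exact sup_le_sup_left hjsj.le _
  refine ⟨part1, ?_⟩
  -- Part 2
  have h2 : ∃ a b : α, (jstar ≤ a ∧ ¬ j ≤ a) ∧ (jstar ≤ b ∧ ¬ j ≤ b) ∧ j ≤ a ⊔ b := by
    by_contra hcon
    push_neg at hcon
    apply hk
    set K : Finset α := Finset.univ.filter (fun x => jstar ≤ x ∧ ¬ j ≤ x) with hK
    have hKne : K.Nonempty :=
      ⟨jstar, by rw [hK, Finset.mem_filter]; exact ⟨Finset.mem_univ _, le_rfl, hnjjs⟩⟩
    refine ⟨K.sup' hKne id, ?_, ?_⟩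
    · have := Finset.sup'_mem {a : α | jstar ≤ a ∧ ¬ j ≤ a}
        (fun x hx y hy => ⟨hx.1.trans le_sup_left, hcon x y hx hy⟩)
        K hKne id (fun i hi => by
          rw [hK, Finset.mem_filter] at hi; exact hi.2)
      exact this
    · intro b hb
      have hbK : b ∈ K := by
        rw [hK, Finset.mem_filter]; exact ⟨Finset.mem_univ _, hb⟩
      exact Finset.le_sup' id hbK
  obtain ⟨a, b, ⟨hjsa, hja⟩, ⟨hjsb, hjb⟩, hjab⟩ := h2
  have hnab : ¬ a ≤ b := fun h => hjb (hjab.trans (sup_le h le_rfl))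
  have hnba : ¬ b ≤ a := fun h => hja (hjab.trans (sup_le le_rfl h))
  have hane : a ≠ b := fun h => hnab (h ▸ le_rfl)
  have hnaj : ¬ a ≤ j := by
    intro h
    have h1 : a < j := lt_of_le_of_ne h (fun hq => hja (hq ▸ le_rfl))
    have h2 : a = jstar := le_antisymm (below_joinIrred hj hstar h1) hjsa
    exact hjb (hjab.trans (sup_le (h2 ▸ hjsb) le_rfl))
  have hnbj : ¬ b ≤ j := by
    intro h
    have h1 : b < j := lt_of_le_of_ne h (fun hq => hjb (hq ▸ le_rfl))
    have h2 : b = jstar := le_antisymm (below_joinIrred hj hstar h1) hjsb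
    exact hja (hjab.trans (sup_le le_rfl (h2 ▸ hjsa)))
  refine ⟨({a, b} : Finset α), ⟨a, Finset.mem_insert_self _ _⟩, ?_, ?_, ?_, ?_⟩
  · intro hjY
    rcases Finset.mem_insert.mp hjY with rfl | h
    · exact hja le_rfl
    · exact hjb ((Finset.mem_singleton.mp h) ▸ le_rfl)
  · intro x hx y hy hxy
    simp only [Finset.coe_insert, Finset.coe_singleton, Set.mem_insert_iff,
      Set.mem_singleton_iff] at hx hy
    rcases hx with rfl | rfl <;> rcases hy with rfl | rfl
    · exact absurd rfl hxy
    · exact hnab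
    · exact hnba
    · exact absurd rfl hxy
  · intro x hx y hy hxy
    simp only [Finset.coe_insert, Finset.coe_singleton, Set.mem_insert_iff,
      Set.mem_singleton_iff] at hx hy
    rcases hx with rfl | rfl | rfl <;> rcases hy with rfl | rfl | rfl
    · exact absurd rfl hxy
    · exact hja
    · exact hjb
    · exact hnaj
    · exact absurd rfl hxy
    · exact hnab
    · exact hnbj
    · exact hnba
    · exact absurd rfl hxy
  · have hsup : ({a, b} : Finset α).sup id = a ⊔ b := by simp
    rw [hsup, sup_eq_left.mpr hjab, sup_eq_left.mpr (hjsa.trans le_sup_left)]
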